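/- Let Λ be a scale such that Σₙ ∩ Δₙ^{3λ(n)} = ∅ for all n ≥ 1. Then for any element g with a spike decomposition of height n, the prefix a in any spike decomposition g = a·σ·b has height strictly less than n: if a itself admits a spike decomposition of height m, then m < n. (Height-decrease along prefixes.) -/
import Mathlib


open scoped Pointwise

variable {G : Type*} [Group G]

/-- The set of products of at most `k` elements of `D` (including the empty product). -/
def ball (D : Set G) (k : ℕ) : Set G :=
  {g | ∃ l : List G, (∀ x ∈ l, x ∈ D) ∧ l.length ≤ k ∧ l.prod = g}

/-- `Δₙ`: the union of the spiking sets `Σᵢ` (for `1 ≤ i < n`), the filling sets `Aᵢ`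
(for `i < n`), and their inverses. -/
def Delta (S A : ℕ → Set G) (n : ℕ) : Set G :=
  (⋃ i ∈ Set.Ico 1 n, (S i ∪ (S i)⁻¹)) ∪ (⋃ i ∈ Set.Iio n, (A i ∪ (A i)⁻¹))

/-- A spike decomposition of `g` of height `n`: `g = a·σ·b` with `σ ∈ Σₙ` and
`a, b ∈ Δₙ^{λ(n)}`. -/
def IsSpikeDecomp (lam : ℕ → ℕ) (S A : ℕ → Set G) (g : G) (n : ℕ) (a σ b : G) : Prop :=
  1 ≤ n ∧ σ ∈ S n ∧ a ∈ ball (Delta S A n) (lam n) ∧ b ∈ ball (Delta S A n) (lam n) ∧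
    g = a * σ * b

lemma ball_mono {D D' : Set G} (hD : D ⊆ D') {k k' : ℕ} (hk : k ≤ k') :
    ball D k ⊆ ball D' k' := by
  rintro g ⟨l, hl, hlen, hprod⟩
  exact ⟨l, fun x hx => hD (hl x hx), hlen.trans hk, hprod⟩

lemma ball_mul' {D : Set G} {k k' : ℕ} {x y : G} (hx : x ∈ ball D k) (hy : y ∈ ball D k') :
    x * y ∈ ball D (k + k') := by
  obtain ⟨l, hl, hlen, hprod⟩ := hx
  obtain ⟨l', hl', hlen', hprod'⟩ := hy
  refine ⟨l ++ l', ?_, ?_, ?_⟩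
  · intro z hz
    rcases List.mem_append.mp hz with h | h
    · exact hl z h
    · exact hl' z h
  · simpa using Nat.add_le_add hlen hlen'
  · simp [hprod, hprod']

lemma Delta_symm {S A : ℕ → Set G} {n : ℕ} {x : G} (hx : x ∈ Delta S A n) :
    x⁻¹ ∈ Delta S A n := by
  rcases hx with h | h
  · left
    simp only [Set.mem_iUnion] at h ⊢
    obtain ⟨i, hi, hx⟩ := h
    refine ⟨i, hi, ?_⟩
    rcases hx with h | h
    · exact Or.inr (Set.inv_mem_inv.mpr h)
    · exact Or.inl (by simpa using h)
  · right
    simp only [Set.mem_iUnion] at h ⊢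
    obtain ⟨i, hi, hx⟩ := h
    refine ⟨i, hi, ?_⟩
    rcases hx with h | h
    · exact Or.inr (Set.inv_mem_inv.mpr h)
    · exact Or.inl (by simpa using h)

lemma ball_inv {S A : ℕ → Set G} {n k : ℕ} {x : G} (hx : x ∈ ball (Delta S A n) k) :
    x⁻¹ ∈ ball (Delta S A n) k := by
  obtain ⟨l, hl, hlen, hprod⟩ := hx
  refine ⟨(l.map (·⁻¹)).reverse, ?_, ?_, ?_⟩
  · intro z hz
    simp only [List.mem_reverse, List.mem_map] at hz
    obtain ⟨y, hy, rfl⟩ := hz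
    exact Delta_symm (hl y hy)
  · simpa using hlen
  · rw [← hprod]
    exact (List.prod_inv_reverse l).symm

lemma Delta_mono {S A : ℕ → Set G} {n m : ℕ} (h : n ≤ m) :
    Delta S A n ⊆ Delta S A m := by
  apply Set.union_subset_union <;>
    exact Set.biUnion_subset_biUnion_left (fun i hi => by
      simp only [Set.mem_Ico, Set.mem_Iio] at *
      omega)

/-- Height decrease along prefixes: if `Σₙ ∩ Δₙ^{3λ(n)} = ∅` for all `n ≥ 1`, then the
prefix of a height-`n` spike decomposition has height strictly less than `n`. -/
theorem prefix_height_lt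
    (lam : ℕ → ℕ) (S A : ℕ → Set G) (hlam : Monotone lam)
    (hsep : ∀ n, 1 ≤ n → ∀ σ ∈ S n, σ ∉ ball (Delta S A n) (3 * lam n))
    (g : G) (n : ℕ) (a σ b : G) (h : IsSpikeDecomp lam S A g n a σ b)
    (m : ℕ) (a' σ' b' : G) (h' : IsSpikeDecomp lam S A a m a' σ' b') :
    m < n := by
  by_contra hmn
  push_neg at hmn
  obtain ⟨hn1, hσ, ha, hb, hg⟩ := h
  obtain ⟨hm1, hσ', ha', hb', hab⟩ := h'
  -- a ∈ ball (Delta S A m) (lam m)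
  have ha2 : a ∈ ball (Delta S A m) (lam m) :=
    ball_mono (Delta_mono hmn) (hlam hmn) ha
  -- σ' = a'⁻¹ * a * b'⁻¹
  have hσ'eq : σ' = a'⁻¹ * a * b'⁻¹ := by
    rw [hab]; group
  have : σ' ∈ ball (Delta S A m) (lam m + lam m + lam m) := by
    rw [hσ'eq]
    exact ball_mul' (ball_mul' (ball_inv ha') ha2) (ball_inv hb')
  have h3 : σ' ∈ ball (Delta S A m) (3 * lam m) := by
    have : lam m + lam m + lam m = 3 * lam m := by ring
    rwa [this] at ‹σ' ∈ ball (Delta S A m) (lam m + lam m + lam m)›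
  exact hsep m hm1 σ' hσ' h3
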